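/- Let G ∼ RIG(n,d,p) where 1−p = (1−δ²)^d = Ω(1). Then the expected triangle count satisfies E[T(G)] = C(n,3)·(p³ + dδ³·(1+2p)·(1−p)² + O(dδ⁴)) as n → ∞. -/

import Mathlib

open MeasureTheory Filter

noncomputable section

/-- Total variation distance between two measures. -/
def tvDist {α : Type*} [MeasurableSpace α] (μ ν : Measure α) : ℝ :=
  ⨆ s : Set α, |(μ s).toReal - (ν s).toReal|

/-- The Bernoulli measure on `Bool` with success probability `p`. -/
def bern (p : ℝ) : Measure Bool :=
  ENNReal.ofReal p • Measure.dirac true + ENNReal.ofReal (1 - p) • Measure.dirac false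

/-- Index type for potential edges of a graph on `Fin n`. -/
abbrev PairIdx (n : ℕ) := {e : Fin n × Fin n // e.1 < e.2}

/-- Erdős–Rényi graph `G(n,p)`, as a measure on edge indicator functions. -/
def erdosRenyi (n : ℕ) (p : ℝ) : Measure (PairIdx n → Bool) :=
  Measure.pi fun _ => bern p

/-- Membership configuration of `n` independent `δ`-random subsets of `{1,…,d}`. -/
def rigConfig (n d : ℕ) (δ : ℝ) : Measure (Fin n → Fin d → Bool) :=
  Measure.pi fun _ => Measure.pi fun _ => bern δ

/-- Cardinality of `S_i ∩ S_j` for a membership configuration. -/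
def interCard {n d : ℕ} (x : Fin n → Fin d → Bool) (i j : Fin n) : ℕ :=
  (Finset.univ.filter fun k => x i k = true ∧ x j k = true).card

/-- The τ-random intersection graph: edge `{i,j}` present iff `|S_i ∩ S_j| ≥ τ`. -/
def rigTau (n d : ℕ) (δ : ℝ) (τ : ℕ) : Measure (PairIdx n → Bool) :=
  (rigConfig n d δ).map fun x e => decide (τ ≤ interCard x e.1.1 e.1.2)

/-- The random intersection graph `RIG(n,d,p)` where `p = 1 - (1-δ²)^d`. -/
def rig (n d : ℕ) (δ : ℝ) : Measure (PairIdx n → Bool) := rigTau n d δ 1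

/-- Edge indicator of the unordered pair `{i,j}` in a graph. -/
def edgeB {n : ℕ} (g : PairIdx n → Bool) (i j : Fin n) : Bool :=
  if h : i < j then g ⟨(i, j), h⟩
  else if h' : j < i then g ⟨(j, i), h'⟩
  else false

/-- Ordered triples `i < j < k` of vertices. -/
def triples (n : ℕ) : Finset (Fin n × Fin n × Fin n) :=
  Finset.univ.filter fun t => t.1 < t.2.1 ∧ t.2.1 < t.2.2

/-- The triangle count `T(G)` of a graph. -/
def triangleCount {n : ℕ} (g : PairIdx n → Bool) : ℕ :=
  ((triples n).filter fun t =>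
    edgeB g t.1 t.2.1 = true ∧ edgeB g t.1 t.2.2 = true ∧ edgeB g t.2.1 t.2.2 = true).card



def wB (δ : ℝ) (b : Bool) : ℝ := if b then δ else 1 - δ

def wR {d : ℕ} (δ : ℝ) (a : Fin d → Bool) : ℝ := ∏ k, wB δ (a k)

lemma sum_wB (δ : ℝ) : ∑ b, wB δ b = 1 := by
  simp [wB]

lemma sum_wR {d : ℕ} (δ : ℝ) : ∑ a : Fin d → Bool, wR δ a = 1 := by
  classical
  unfold wR
  rw [← Fintype.piFinset_univ, ← Finset.prod_univ_sum,
    Finset.prod_congr rfl fun _ _ => sum_wB δ, Finset.prod_const_one]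

lemma marg {ι V : Type*} [Fintype ι] [DecidableEq ι] [Fintype V] [DecidableEq V]
    (W : V → ℝ) (hW : ∑ v, W v = 1) {i j l : ι} (hij : i ≠ j) (hil : i ≠ l) (hjl : j ≠ l)
    (φ : V → V → V → ℝ) :
    ∑ x : ι → V, φ (x i) (x j) (x l) * ∏ m, W (x m)
      = ∑ a, ∑ b, ∑ c, φ a b c * (W a * (W b * W c)) := by
  classical
  have key : ∀ a b c : V,
      ∑ x ∈ Finset.univ.filter (fun x : ι → V => (x i, x j, x l) = (a, b, c)),
        ∏ m, W (x m) = W a * (W b * W c) := by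
    intro a b c
    set t : ι → Finset V := fun m =>
      if m = i then {a} else if m = j then {b} else if m = l then {c} else Finset.univ with ht
    have hfil : Finset.univ.filter (fun x : ι → V => (x i, x j, x l) = (a, b, c))
        = Fintype.piFinset t := by
      ext x
      simp only [Finset.mem_filter, Finset.mem_univ, true_and, Fintype.mem_piFinset,
        Prod.mk.injEq, ht]
      constructor
      · rintro ⟨h1, h2, h3⟩ m
        by_cases hmi : m = i
        · simp [hmi, h1]
        by_cases hmj : m = j
        · simp [hmi, hmj, h2, Ne.symm hij]
        by_cases hml : m = l
        · simp [hmi, hmj, hml, h3, Ne.symm hil, Ne.symm hjl]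
        · simp [hmi, hmj, hml]
      · intro h
        have h1 := h i; have h2 := h j; have h3 := h l
        simp [hij, hil, hjl, Ne.symm hij, Ne.symm hil, Ne.symm hjl] at h1 h2 h3
        exact ⟨h1, h2, h3⟩
    rw [hfil, ← Finset.prod_univ_sum]
    have : ∀ m, (∑ v ∈ t m, W v)
        = if m = i then W a else if m = j then W b else if m = l then W c else 1 := by
      intro m
      simp only [ht]
      split_ifs <;> simp [hW]
    rw [Finset.prod_congr rfl (fun m _ => this m)]
    rw [show (Finset.univ : Finset ι) = insert i (insert j (insert l
      ((Finset.univ : Finset ι) \ {i, j, l}))) from ?_]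
    · rw [Finset.prod_insert, Finset.prod_insert, Finset.prod_insert]
      · rw [if_pos rfl, if_neg (Ne.symm hij), if_pos rfl, if_neg (Ne.symm hil),
          if_neg (Ne.symm hjl), if_pos rfl]
        rw [Finset.prod_eq_one]
        · ring
        · intro m hm
          simp only [Finset.mem_sdiff, Finset.mem_insert, Finset.mem_singleton] at hm
          push_neg at hm
          simp [hm.2.1, hm.2.2.1, hm.2.2.2]
      · simp
      · simp [hjl]
      · simp [hij, hil]
    · ext m
      simp only [Finset.mem_insert, Finset.mem_sdiff, Finset.mem_univ, true_and,
        Finset.mem_singleton, true_iff, iff_true]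
      by_cases h1 : m = i
      · tauto
      by_cases h2 : m = j
      · tauto
      by_cases h3 : m = l
      · tauto
      · tauto
  calc ∑ x : ι → V, φ (x i) (x j) (x l) * ∏ m, W (x m)
      = ∑ abc : V × V × V, ∑ x ∈ Finset.univ.filter
          (fun x : ι → V => (x i, x j, x l) = abc),
          φ (x i) (x j) (x l) * ∏ m, W (x m) := by
        rw [Finset.sum_fiberwise]
    _ = ∑ abc : V × V × V, φ abc.1 abc.2.1 abc.2.2 * (W abc.1 * (W abc.2.1 * W abc.2.2)) := by
        refine Finset.sum_congr rfl fun abc _ => ?_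
        rw [← key abc.1 abc.2.1 abc.2.2, Finset.mul_sum]
        refine Finset.sum_congr rfl fun x hx => ?_
        simp only [Finset.mem_filter, Prod.ext_iff] at hx
        obtain ⟨-, h1, h2, h3⟩ := hx
        rw [h1, h2, h3]
    _ = ∑ a, ∑ b, ∑ c, φ a b c * (W a * (W b * W c)) := by
        rw [Fintype.sum_prod_type]
        exact Finset.sum_congr rfl fun a _ => by rw [Fintype.sum_prod_type]



/-- Key factorization: a triple sum of a per-coordinate indicator against product weights
equals the d-th power of the one-coordinate sum. -/
lemma triple_prod_sum {d : ℕ} (δ : ℝ) (ψ : Bool → Bool → Bool → Prop)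
    [∀ a b c, Decidable (ψ a b c)]
    (P : (Fin d → Bool) → (Fin d → Bool) → (Fin d → Bool) → Prop)
    [∀ a b c, Decidable (P a b c)]
    (hP : ∀ a b c, P a b c ↔ ∀ k, ψ (a k) (b k) (c k)) :
    ∑ a : Fin d → Bool, ∑ b : Fin d → Bool, ∑ c : Fin d → Bool,
      (if P a b c then (1:ℝ) else 0) * (wR δ a * (wR δ b * wR δ c))
    = (∑ v : Bool × Bool × Bool,
        (if ψ v.1 v.2.1 v.2.2 then (1:ℝ) else 0)
          * (wB δ v.1 * (wB δ v.2.1 * wB δ v.2.2))) ^ d := by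
  classical
  set h : Bool × Bool × Bool → ℝ :=
    fun v => (if ψ v.1 v.2.1 v.2.2 then (1:ℝ) else 0)
      * (wB δ v.1 * (wB δ v.2.1 * wB δ v.2.2)) with hh
  have hrhs : (∑ v, h v) ^ d = ∑ y : Fin d → Bool × Bool × Bool, ∏ k, h (y k) := by
    rw [← Fintype.piFinset_univ, ← Finset.prod_univ_sum]
    simp
  rw [hrhs]
  set e : (Fin d → Bool × Bool × Bool) ≃
      ((Fin d → Bool) × ((Fin d → Bool) × (Fin d → Bool))) :=
    { toFun := fun y => (fun k => (y k).1, fun k => (y k).2.1, fun k => (y k).2.2)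
      invFun := fun abc k => (abc.1 k, abc.2.1 k, abc.2.2 k)
      left_inv := fun y => by funext k; rfl
      right_inv := fun abc => rfl } with he
  rw [← Equiv.sum_comp e.symm, Fintype.sum_prod_type]
  refine Finset.sum_congr rfl fun a _ => ?_
  rw [Fintype.sum_prod_type]
  refine Finset.sum_congr rfl fun b _ => ?_
  refine Finset.sum_congr rfl fun c _ => ?_
  show (if P a b c then (1:ℝ) else 0) * (wR δ a * (wR δ b * wR δ c))
    = ∏ k, h (a k, b k, c k)
  rw [if_congr (hP a b c) rfl rfl]
  by_cases hall : ∀ k, ψ (a k) (b k) (c k)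
  · rw [if_pos hall, one_mul]
    have hk : ∀ k, h (a k, b k, c k) = wB δ (a k) * (wB δ (b k) * wB δ (c k)) := by
      intro k; rw [hh]; simp [hall k]
    rw [Finset.prod_congr rfl fun k _ => hk k]
    simp only [wR, Finset.prod_mul_distrib]
  · rw [if_neg hall]
    push_neg at hall
    obtain ⟨k0, hk0⟩ := hall
    rw [eq_comm, Finset.prod_eq_zero (Finset.mem_univ k0)]
    · ring
    · rw [hh]; simp [hk0]

lemma boolsum_true (δ : ℝ) :
    (∑ v : Bool × Bool × Bool,
      (if True then (1:ℝ) else 0) * (wB δ v.1 * (wB δ v.2.1 * wB δ v.2.2))) = 1 := by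
  simp [Fintype.sum_prod_type, wB]; ring

lemma boolsum_ab (δ : ℝ) :
    (∑ v : Bool × Bool × Bool,
      (if ¬(v.1 = true ∧ v.2.1 = true) then (1:ℝ) else 0)
        * (wB δ v.1 * (wB δ v.2.1 * wB δ v.2.2))) = 1 - δ^2 := by
  simp [Fintype.sum_prod_type, wB]; ring

lemma boolsum_ac (δ : ℝ) :
    (∑ v : Bool × Bool × Bool,
      (if ¬(v.1 = true ∧ v.2.2 = true) then (1:ℝ) else 0)
        * (wB δ v.1 * (wB δ v.2.1 * wB δ v.2.2))) = 1 - δ^2 := by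
  simp [Fintype.sum_prod_type, wB]; ring

lemma boolsum_bc (δ : ℝ) :
    (∑ v : Bool × Bool × Bool,
      (if ¬(v.2.1 = true ∧ v.2.2 = true) then (1:ℝ) else 0)
        * (wB δ v.1 * (wB δ v.2.1 * wB δ v.2.2))) = 1 - δ^2 := by
  simp [Fintype.sum_prod_type, wB]; ring

lemma boolsum_ab_ac (δ : ℝ) :
    (∑ v : Bool × Bool × Bool,
      (if ¬(v.1 = true ∧ v.2.1 = true) ∧ ¬(v.1 = true ∧ v.2.2 = true) then (1:ℝ) else 0)
        * (wB δ v.1 * (wB δ v.2.1 * wB δ v.2.2))) = 1 - 2*δ^2 + δ^3 := by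
  simp [Fintype.sum_prod_type, wB]; ring

lemma boolsum_ab_bc (δ : ℝ) :
    (∑ v : Bool × Bool × Bool,
      (if ¬(v.1 = true ∧ v.2.1 = true) ∧ ¬(v.2.1 = true ∧ v.2.2 = true) then (1:ℝ) else 0)
        * (wB δ v.1 * (wB δ v.2.1 * wB δ v.2.2))) = 1 - 2*δ^2 + δ^3 := by
  simp [Fintype.sum_prod_type, wB]; ring

lemma boolsum_ac_bc (δ : ℝ) :
    (∑ v : Bool × Bool × Bool,
      (if ¬(v.1 = true ∧ v.2.2 = true) ∧ ¬(v.2.1 = true ∧ v.2.2 = true) then (1:ℝ) else 0)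
        * (wB δ v.1 * (wB δ v.2.1 * wB δ v.2.2))) = 1 - 2*δ^2 + δ^3 := by
  simp [Fintype.sum_prod_type, wB]; ring

lemma boolsum_all (δ : ℝ) :
    (∑ v : Bool × Bool × Bool,
      (if ¬(v.1 = true ∧ v.2.1 = true) ∧ ¬(v.1 = true ∧ v.2.2 = true)
          ∧ ¬(v.2.1 = true ∧ v.2.2 = true) then (1:ℝ) else 0)
        * (wB δ v.1 * (wB δ v.2.1 * wB δ v.2.2))) = 1 - 3*δ^2 + 2*δ^3 := by
  simp [Fintype.sum_prod_type, wB]; ring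

/-- inclusion-exclusion for indicator of triple conjunction. -/
lemma ind_split (A B C : Prop) [Decidable A] [Decidable B] [Decidable C] :
    (if A ∧ B ∧ C then (1:ℝ) else 0)
      = 1 - (if ¬A then (1:ℝ) else 0) - (if ¬B then (1:ℝ) else 0) - (if ¬C then (1:ℝ) else 0)
        + (if ¬A ∧ ¬B then (1:ℝ) else 0) + (if ¬A ∧ ¬C then (1:ℝ) else 0)
        + (if ¬B ∧ ¬C then (1:ℝ) else 0) - (if ¬A ∧ ¬B ∧ ¬C then (1:ℝ) else 0) := by
  by_cases hA : A <;> by_cases hB : B <;> by_cases hC : C <;> simp [hA, hB, hC]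

def hasCommon {d : ℕ} (a b : Fin d → Bool) : Prop := ∃ k, a k = true ∧ b k = true

instance {d : ℕ} (a b : Fin d → Bool) : Decidable (hasCommon a b) := by
  unfold hasCommon; infer_instance

lemma triple_sum_eval {n d : ℕ} (δ : ℝ) {i j l : Fin n}
    (hij : i ≠ j) (hil : i ≠ l) (hjl : j ≠ l) :
    ∑ x : Fin n → Fin d → Bool,
      (if hasCommon (x i) (x j) ∧ hasCommon (x i) (x l) ∧ hasCommon (x j) (x l)
        then (1:ℝ) else 0) * ∏ m, wR δ (x m)
    = 1 - 3*(1-δ^2)^d + 3*(1-2*δ^2+δ^3)^d - (1-3*δ^2+2*δ^3)^d := by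
  classical
  rw [marg (wR δ) (sum_wR δ) hij hil hjl
    (fun a b c => if hasCommon a b ∧ hasCommon a c ∧ hasCommon b c then (1:ℝ) else 0)]
  have expand : ∀ a b c : Fin d → Bool,
      (if hasCommon a b ∧ hasCommon a c ∧ hasCommon b c then (1:ℝ) else 0)
          * (wR δ a * (wR δ b * wR δ c))
      = (if True then (1:ℝ) else 0) * (wR δ a * (wR δ b * wR δ c))
        - (if ¬hasCommon a b then (1:ℝ) else 0) * (wR δ a * (wR δ b * wR δ c))
        - (if ¬hasCommon a c then (1:ℝ) else 0) * (wR δ a * (wR δ b * wR δ c))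
        - (if ¬hasCommon b c then (1:ℝ) else 0) * (wR δ a * (wR δ b * wR δ c))
        + (if ¬hasCommon a b ∧ ¬hasCommon a c then (1:ℝ) else 0) * (wR δ a * (wR δ b * wR δ c))
        + (if ¬hasCommon a b ∧ ¬hasCommon b c then (1:ℝ) else 0) * (wR δ a * (wR δ b * wR δ c))
        + (if ¬hasCommon a c ∧ ¬hasCommon b c then (1:ℝ) else 0) * (wR δ a * (wR δ b * wR δ c))
        - (if ¬hasCommon a b ∧ ¬hasCommon a c ∧ ¬hasCommon b c then (1:ℝ) else 0)
            * (wR δ a * (wR δ b * wR δ c)) := by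
    intro a b c
    rw [ind_split (hasCommon a b) (hasCommon a c) (hasCommon b c)]
    simp only [if_true]
    ring
  rw [Finset.sum_congr rfl fun a _ => Finset.sum_congr rfl fun b _ =>
    Finset.sum_congr rfl fun c _ => expand a b c]
  simp only [Finset.sum_sub_distrib, Finset.sum_add_distrib]
  rw [triple_prod_sum δ (fun _ _ _ => True) _ (fun a b c => by simp),
    triple_prod_sum δ (fun α β _ => ¬(α = true ∧ β = true))
      (fun a b c => ¬hasCommon a b) (fun a b c => by simp only [hasCommon, not_exists]),
    triple_prod_sum δ (fun α _ γ => ¬(α = true ∧ γ = true))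
      (fun a b c => ¬hasCommon a c) (fun a b c => by simp only [hasCommon, not_exists]),
    triple_prod_sum δ (fun _ β γ => ¬(β = true ∧ γ = true))
      (fun a b c => ¬hasCommon b c) (fun a b c => by simp only [hasCommon, not_exists]),
    triple_prod_sum δ (fun α β γ => ¬(α = true ∧ β = true) ∧ ¬(α = true ∧ γ = true))
      (fun a b c => ¬hasCommon a b ∧ ¬hasCommon a c)
      (fun a b c => by simp only [hasCommon, not_exists, ← forall_and]),
    triple_prod_sum δ (fun α β γ => ¬(α = true ∧ β = true) ∧ ¬(β = true ∧ γ = true))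
      (fun a b c => ¬hasCommon a b ∧ ¬hasCommon b c)
      (fun a b c => by simp only [hasCommon, not_exists, ← forall_and]),
    triple_prod_sum δ (fun α β γ => ¬(α = true ∧ γ = true) ∧ ¬(β = true ∧ γ = true))
      (fun a b c => ¬hasCommon a c ∧ ¬hasCommon b c)
      (fun a b c => by simp only [hasCommon, not_exists, ← forall_and]),
    triple_prod_sum δ (fun α β γ => ¬(α = true ∧ β = true) ∧ ¬(α = true ∧ γ = true)
        ∧ ¬(β = true ∧ γ = true))
      (fun a b c => ¬hasCommon a b ∧ ¬hasCommon a c ∧ ¬hasCommon b c)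
      (fun a b c => by simp only [hasCommon, not_exists, ← forall_and]),
    boolsum_true, boolsum_ab, boolsum_ac, boolsum_bc, boolsum_ab_ac, boolsum_ab_bc,
    boolsum_ac_bc, boolsum_all]
  ring

lemma wB_nonneg {δ : ℝ} (h0 : 0 ≤ δ) (h1 : δ ≤ 1) (b : Bool) : 0 ≤ wB δ b := by
  cases b <;> simp [wB] <;> linarith

lemma bern_prob {δ : ℝ} (h0 : 0 ≤ δ) (h1 : δ ≤ 1) : IsProbabilityMeasure (bern δ) := by
  constructor
  simp [bern, ← ENNReal.ofReal_add h0 (by linarith : (0:ℝ) ≤ 1 - δ)]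

lemma bern_singleton {δ : ℝ} (b : Bool) : bern δ {b} = ENNReal.ofReal (wB δ b) := by
  cases b <;> simp [bern, wB, Measure.dirac_apply]

lemma rigConfig_singleton {n d : ℕ} {δ : ℝ} (h0 : 0 ≤ δ) (h1 : δ ≤ 1)
    (x : Fin n → Fin d → Bool) :
    ((rigConfig n d δ) {x}).toReal = ∏ m, wR δ (x m) := by
  haveI := bern_prob h0 h1
  rw [rigConfig, ← Set.univ_pi_singleton x, Measure.pi_pi, ENNReal.toReal_prod]
  refine Finset.prod_congr rfl fun m _ => ?_
  rw [← Set.univ_pi_singleton (x m), Measure.pi_pi, ENNReal.toReal_prod, wR]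
  refine Finset.prod_congr rfl fun k _ => ?_
  rw [bern_singleton, ENNReal.toReal_ofReal (wB_nonneg h0 h1 _)]

lemma integral_rig (n d : ℕ) {δ : ℝ} (h0 : 0 ≤ δ) (h1 : δ ≤ 1) :
    ∫ g, (triangleCount g : ℝ) ∂(rig n d δ)
    = ∑ x : Fin n → Fin d → Bool, (∏ m, wR δ (x m)) *
        (triangleCount (fun e : PairIdx n => decide (1 ≤ interCard x e.1.1 e.1.2)) : ℝ) := by
  haveI := bern_prob h0 h1
  haveI : IsProbabilityMeasure (rigConfig n d δ) := by unfold rigConfig; infer_instance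
  rw [rig, rigTau,
    integral_map (measurable_of_countable _).aemeasurable
      (measurable_of_countable _).stronglyMeasurable.aestronglyMeasurable,
    integral_fintype .of_finite]
  refine Finset.sum_congr rfl fun x _ => ?_
  rw [smul_eq_mul, measureReal_def, rigConfig_singleton h0 h1]

lemma edgeB_F {n d : ℕ} (x : Fin n → Fin d → Bool) {i j : Fin n} (h : i < j) :
    (edgeB (fun e : PairIdx n => decide (1 ≤ interCard x e.1.1 e.1.2)) i j = true)
      ↔ hasCommon (x i) (x j) := by
  rw [edgeB, dif_pos h]
  simp only [decide_eq_true_eq, interCard, Nat.one_le_iff_ne_zero, Ne,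
    Finset.card_eq_zero, ← Finset.nonempty_iff_ne_empty, Finset.filter_nonempty_iff,
    Finset.mem_univ, true_and, hasCommon]

lemma sorted_triple_ext {n : ℕ} {a b c a' b' c' : Fin n} (h1 : a < b) (h2 : b < c)
    (h1' : a' < b') (h2' : b' < c')
    (hs : ({a, b, c} : Finset (Fin n)) = {a', b', c'}) :
    a = a' ∧ b = b' ∧ c = c' := by
  have m1 : a ∈ ({a', b', c'} : Finset (Fin n)) := hs ▸ (by simp)
  have m2 : b ∈ ({a', b', c'} : Finset (Fin n)) := hs ▸ (by simp)
  have m3 : c ∈ ({a', b', c'} : Finset (Fin n)) := hs ▸ (by simp)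
  have m1' : a' ∈ ({a, b, c} : Finset (Fin n)) := hs.symm ▸ (by simp)
  have m2' : b' ∈ ({a, b, c} : Finset (Fin n)) := hs.symm ▸ (by simp)
  have m3' : c' ∈ ({a, b, c} : Finset (Fin n)) := hs.symm ▸ (by simp)
  simp only [Finset.mem_insert, Finset.mem_singleton] at m1 m2 m3 m1' m2' m3'
  simp only [Fin.ext_iff] at m1 m2 m3 m1' m2' m3' ⊢
  have v1 : a.val < b.val := h1
  have v2 : b.val < c.val := h2
  have v1' : a'.val < b'.val := h1'
  have v2' : b'.val < c'.val := h2'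
  omega

lemma exists_sorted {n : ℕ} {x y z : Fin n} (hxy : x ≠ y) (hxz : x ≠ z) (hyz : y ≠ z) :
    ∃ a b c : Fin n, a < b ∧ b < c ∧ ({a, b, c} : Finset (Fin n)) = {x, y, z} := by
  rcases hxy.lt_or_gt with h1 | h1 <;> rcases hxz.lt_or_gt with h2 | h2 <;>
    rcases hyz.lt_or_gt with h3 | h3
  · exact ⟨x, y, z, h1, h3, rfl⟩
  · exact ⟨x, z, y, h2, h3, by ext w; simp; tauto⟩
  · exact absurd (h2.trans (h1.trans h3)) (lt_irrefl z)
  · exact ⟨z, x, y, h2, h1, by ext w; simp; tauto⟩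
  · exact ⟨y, x, z, h1, h2, by ext w; simp; tauto⟩
  · exact absurd (h3.trans (h1.trans h2)) (lt_irrefl z)
  · exact ⟨y, z, x, h3, h2, by ext w; simp; tauto⟩
  · exact ⟨z, y, x, h3, h1, by ext w; simp; tauto⟩

lemma card_triples (n : ℕ) : (triples n).card = n.choose 3 := by
  classical
  have hpc := Finset.card_powersetCard 3 (Finset.univ : Finset (Fin n))
  rw [Finset.card_univ, Fintype.card_fin] at hpc
  rw [← hpc]
  apply Finset.card_bij (fun t _ => ({t.1, t.2.1, t.2.2} : Finset (Fin n)))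
  · intro t ht
    rw [triples, Finset.mem_filter] at ht
    obtain ⟨-, h12, h23⟩ := ht
    rw [Finset.mem_powersetCard]
    refine ⟨Finset.subset_univ _, ?_⟩
    rw [Finset.card_insert_of_notMem (by simp [(h12.trans h23).ne, h12.ne]),
      Finset.card_insert_of_notMem (by simp [h23.ne]), Finset.card_singleton]
  · intro t1 ht1 t2 ht2 heq
    rw [triples, Finset.mem_filter] at ht1 ht2
    obtain ⟨e1, e2, e3⟩ := sorted_triple_ext ht1.2.1 ht1.2.2 ht2.2.1 ht2.2.2 heq
    exact Prod.ext e1 (Prod.ext e2 e3)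
  · intro s hs
    rw [Finset.mem_powersetCard] at hs
    obtain ⟨x, y, z, hxy, hxz, hyz, rfl⟩ := Finset.card_eq_three.mp hs.2
    obtain ⟨a, b, c, hab, hbc, hset⟩ := exists_sorted hxy hxz hyz
    exact ⟨(a, b, c), by rw [triples, Finset.mem_filter]; exact ⟨Finset.mem_univ _, hab, hbc⟩,
      hset⟩

lemma expectation_formula (n d : ℕ) {δ : ℝ} (h0 : 0 ≤ δ) (h1 : δ ≤ 1) :
    ∫ g, (triangleCount g : ℝ) ∂(rig n d δ)
    = (n.choose 3 : ℝ) *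
        (1 - 3*(1-δ^2)^d + 3*(1-2*δ^2+δ^3)^d - (1-3*δ^2+2*δ^3)^d) := by
  classical
  rw [integral_rig n d h0 h1]
  have hT : ∀ x : Fin n → Fin d → Bool,
      (triangleCount (fun e : PairIdx n => decide (1 ≤ interCard x e.1.1 e.1.2)) : ℝ)
      = ∑ t ∈ triples n,
          (if hasCommon (x t.1) (x t.2.1) ∧ hasCommon (x t.1) (x t.2.2)
              ∧ hasCommon (x t.2.1) (x t.2.2) then (1:ℝ) else 0) := by
    intro x
    rw [triangleCount, Finset.card_filter]
    push_cast
    refine Finset.sum_congr rfl fun t ht => ?_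
    rw [triples, Finset.mem_filter] at ht
    obtain ⟨-, h12, h23⟩ := ht
    exact if_congr (and_congr (edgeB_F x h12) (and_congr (edgeB_F x (h12.trans h23))
      (edgeB_F x h23))) rfl rfl
  rw [Finset.sum_congr rfl fun x _ => by rw [hT x, Finset.mul_sum]]
  rw [Finset.sum_comm]
  have heval : ∀ t ∈ triples n,
      (∑ x : Fin n → Fin d → Bool, (∏ m, wR δ (x m)) *
        (if hasCommon (x t.1) (x t.2.1) ∧ hasCommon (x t.1) (x t.2.2)
            ∧ hasCommon (x t.2.1) (x t.2.2) then (1:ℝ) else 0))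
      = 1 - 3*(1-δ^2)^d + 3*(1-2*δ^2+δ^3)^d - (1-3*δ^2+2*δ^3)^d := by
    intro t ht
    rw [triples, Finset.mem_filter] at ht
    obtain ⟨-, h12, h23⟩ := ht
    rw [Finset.sum_congr rfl fun x _ => mul_comm _ _]
    exact triple_sum_eval δ h12.ne (h12.trans h23).ne h23.ne
  rw [Finset.sum_congr rfl heval, Finset.sum_const, card_triples, nsmul_eq_mul]


lemma pow_sub_pow_le_up (m : ℕ) {x y : ℝ} (h0 : 0 ≤ y) (hxy : y ≤ x) (hx : x ≤ 1) :
    x^(m+1) - y^(m+1) ≤ ((m:ℝ)+1) * (x - y) * x^m := by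
  induction m with
  | zero => simp
  | succ m ih =>
    have hx0 : 0 ≤ x := le_trans h0 hxy
    have hy : y^(m+1) ≤ x^(m+1) := pow_le_pow_left₀ h0 hxy _
    have key : ((m:ℝ)+1+1)*(x-y)*x^(m+1) - (x^(m+1+1) - y^(m+1+1))
        = x*(((m:ℝ)+1)*(x-y)*x^m - (x^(m+1) - y^(m+1)))
          + (x-y)*(x^(m+1) - y^(m+1)) := by ring
    have t1 : 0 ≤ x*(((m:ℝ)+1)*(x-y)*x^m - (x^(m+1) - y^(m+1))) :=
      mul_nonneg hx0 (by linarith)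
    have t2 : 0 ≤ (x-y)*(x^(m+1) - y^(m+1)) :=
      mul_nonneg (by linarith) (by linarith)
    push_cast
    linarith [key]

lemma pow_sub_pow_ge (m : ℕ) {x y : ℝ} (h0 : 0 ≤ y) (hxy : y ≤ x) (hx : x ≤ 1) :
    ((m:ℝ)+1) * (x - y) * y^m ≤ x^(m+1) - y^(m+1) := by
  induction m with
  | zero => simp
  | succ m ih =>
    have hx0 : 0 ≤ x := le_trans h0 hxy
    have hym : 0 ≤ y^m := pow_nonneg h0 m
    have key : x^(m+1+1) - y^(m+1+1) - ((m:ℝ)+1+1)*(x-y)*y^(m+1)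
        = x*((x^(m+1) - y^(m+1)) - ((m:ℝ)+1)*(x-y)*y^m)
          + ((m:ℝ)+1)*(x-y)^2*y^m := by ring
    have t1 : 0 ≤ x*((x^(m+1) - y^(m+1)) - ((m:ℝ)+1)*(x-y)*y^m) :=
      mul_nonneg hx0 (by linarith)
    have t2 : 0 ≤ ((m:ℝ)+1)*(x-y)^2*y^m :=
      mul_nonneg (mul_nonneg (by positivity) (sq_nonneg _)) hym
    push_cast
    linarith [key]

lemma pow_sub_pow_crude (m : ℕ) {x y : ℝ} (h0 : 0 ≤ y) (hxy : y ≤ x) (hx : x ≤ 1) :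
    x^m - y^m ≤ (m:ℝ) * (x - y) := by
  cases m with
  | zero => simp
  | succ m =>
    have h := pow_sub_pow_le_up m h0 hxy hx
    have hxm : x^m ≤ 1 := pow_le_one₀ (le_trans h0 hxy) hx
    have key : ((m:ℝ)+1)*(x-y)*x^m ≤ ((m:ℝ)+1)*(x-y)*1 :=
      mul_le_mul_of_nonneg_left hxm (mul_nonneg (by positivity) (sub_nonneg.mpr hxy))
    push_cast
    linarith

set_option maxHeartbeats 1000000 in
lemma claimX {δ K : ℝ} (m : ℕ) (h0 : 0 < δ) (h1 : δ < 1) (hK : 0 ≤ K)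
    (hdK : ((m:ℝ)+1) * δ^2 ≤ K) :
    |(1-2*δ^2+δ^3)^(m+1) - (1-2*δ^2+δ^4)^(m+1)
      - ((m:ℝ)+1)*δ^3*(1-2*δ^2+δ^4)^(m+1)|
    ≤ (K+2) * (((m:ℝ)+1) * δ^4) := by
  have hδ0 : (0:ℝ) ≤ δ := h0.le
  have hD0 : (0:ℝ) ≤ (m:ℝ)+1 := by positivity
  have hmD : (m:ℝ) ≤ (m:ℝ)+1 := by linarith
  have ha0 : (0:ℝ) ≤ 1-2*δ^2+δ^4 := by nlinarith [sq_nonneg (1-δ^2)]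
  have has : 1-2*δ^2+δ^4 ≤ 1-2*δ^2+δ^3 := by
    nlinarith [mul_nonneg (pow_nonneg hδ0 3) (by linarith : (0:ℝ) ≤ 1-δ)]
  have hs1 : 1-2*δ^2+δ^3 ≤ 1 := by
    nlinarith [mul_nonneg (sq_nonneg δ) (by linarith : (0:ℝ) ≤ 2-δ)]
  have ha1 : 1-2*δ^2+δ^4 ≤ 1 := le_trans has hs1
  have hs0 : (0:ℝ) ≤ 1-2*δ^2+δ^3 := le_trans ha0 has
  have ham1 : (1-2*δ^2+δ^4)^m ≤ 1 := pow_le_one₀ ha0 ha1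
  have hsm1 : (1-2*δ^2+δ^3)^m ≤ 1 := pow_le_one₀ hs0 hs1
  have ham0 : (0:ℝ) ≤ (1-2*δ^2+δ^4)^m := pow_nonneg ha0 m
  have hsm0 : (0:ℝ) ≤ (1-2*δ^2+δ^3)^m := pow_nonneg hs0 m
  have hap : (1-2*δ^2+δ^4)^(m+1) = (1-2*δ^2+δ^4)^m * (1-2*δ^2+δ^4) := pow_succ _ m
  have hsp : (1-2*δ^2+δ^3)^(m+1) = (1-2*δ^2+δ^3)^m * (1-2*δ^2+δ^3) := pow_succ _ m
  have hma : ((m:ℝ)+1) * δ^3 ≤ K*δ := by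
    nlinarith [mul_le_mul_of_nonneg_right hdK hδ0]
  have up := pow_sub_pow_le_up m ha0 has hs1
  have lo := pow_sub_pow_ge m ha0 has hs1
  have crude := pow_sub_pow_crude m ha0 has hs1
  have step1 : (1-2*δ^2+δ^3)^m - (1-2*δ^2+δ^4)^(m+1) ≤ K*δ + 2*δ := by
    have t2 : (1-2*δ^2+δ^4)^m - (1-2*δ^2+δ^4)^(m+1) ≤ 1 - (1-2*δ^2+δ^4) := by
      rw [hap]; nlinarith
    have t3 : 1 - (1-2*δ^2+δ^4) ≤ 2*δ := by nlinarith [pow_nonneg hδ0 4]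
    have t4 : (m:ℝ)*((1-2*δ^2+δ^3) - (1-2*δ^2+δ^4)) ≤ K*δ := by
      have : (m:ℝ)*((1-2*δ^2+δ^3) - (1-2*δ^2+δ^4)) ≤ ((m:ℝ)+1)*δ^3 := by
        nlinarith [mul_nonneg (Nat.cast_nonneg m : (0:ℝ) ≤ m) (pow_nonneg hδ0 4),
          pow_nonneg hδ0 3]
      linarith
    linarith
  rw [abs_le]
  constructor
  · have l0 : ((m:ℝ)+1)*((1-2*δ^2+δ^3) - (1-2*δ^2+δ^4))*(1-2*δ^2+δ^4)^m
        - ((m:ℝ)+1)*δ^3*(1-2*δ^2+δ^4)^(m+1)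
        = ((m:ℝ)+1)*(1-2*δ^2+δ^4)^m*(-δ^4+2*δ^5-δ^7) := by rw [hap]; ring
    have h2d5 : (0:ℝ) ≤ 2*δ^5 - δ^7 := by nlinarith [pow_nonneg hδ0 5]
    have l1 : ((m:ℝ)+1)*(1-2*δ^2+δ^4)^m*(-δ^4+2*δ^5-δ^7)
        ≥ ((m:ℝ)+1)*(1-2*δ^2+δ^4)^m*(-δ^4) := by
      nlinarith [mul_nonneg hD0 ham0]
    have l2 : ((m:ℝ)+1)*(1-2*δ^2+δ^4)^m*(-δ^4) ≥ -(((m:ℝ)+1)*δ^4) := by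
      nlinarith [mul_nonneg (mul_nonneg hD0 (pow_nonneg hδ0 4))
        (by linarith : (0:ℝ) ≤ 1 - (1-2*δ^2+δ^4)^m)]
    have l3 : -((K+2) * (((m:ℝ)+1) * δ^4)) ≤ -(((m:ℝ)+1)*δ^4) := by
      nlinarith [mul_nonneg (mul_nonneg hK hD0) (pow_nonneg hδ0 4),
        mul_nonneg hD0 (pow_nonneg hδ0 4)]
    linarith [lo]
  · have u1 : ((m:ℝ)+1)*((1-2*δ^2+δ^3) - (1-2*δ^2+δ^4))*(1-2*δ^2+δ^3)^m
        ≤ ((m:ℝ)+1)*δ^3*(1-2*δ^2+δ^3)^m := by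
      have hd1 : (1-2*δ^2+δ^3) - (1-2*δ^2+δ^4) ≤ δ^3 := by nlinarith [pow_nonneg hδ0 4]
      nlinarith [mul_nonneg hD0 hsm0]
    have u3 : ((m:ℝ)+1)*δ^3*((1-2*δ^2+δ^3)^m - (1-2*δ^2+δ^4)^(m+1))
        ≤ ((m:ℝ)+1)*δ^3*(K*δ+2*δ) := by
      have := mul_le_mul_of_nonneg_left step1
        (show (0:ℝ) ≤ ((m:ℝ)+1)*δ^3 by positivity)
      linarith
    have u4 : ((m:ℝ)+1)*δ^3*(K*δ+2*δ) = (K+2)*(((m:ℝ)+1)*δ^4) := by ring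
    linarith [up]

set_option maxHeartbeats 1000000 in
lemma claimY {δ K : ℝ} (m : ℕ) (h0 : 0 < δ) (h1 : δ < 1) (hK : 0 ≤ K)
    (hdK : ((m:ℝ)+1) * δ^2 ≤ K) :
    |(1-3*δ^2+2*δ^3)^(m+1) - (1-3*δ^2+3*δ^4-δ^6)^(m+1)
      - 2*(((m:ℝ)+1)*δ^3)*(1-3*δ^2+3*δ^4-δ^6)^(m+1)|
    ≤ (4*K+6) * (((m:ℝ)+1) * δ^4) := by
  have hδ0 : (0:ℝ) ≤ δ := h0.le
  have hD0 : (0:ℝ) ≤ (m:ℝ)+1 := by positivity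
  have hδ2 : (0:ℝ) ≤ 1-δ^2 := by nlinarith
  have hb0 : (0:ℝ) ≤ 1-3*δ^2+3*δ^4-δ^6 := by
    nlinarith [mul_nonneg (mul_nonneg hδ2 hδ2) hδ2]
  have hbs : 1-3*δ^2+3*δ^4-δ^6 ≤ 1-3*δ^2+2*δ^3 := by
    nlinarith [mul_nonneg (mul_nonneg (pow_nonneg hδ0 3) (sq_nonneg (1-δ)))
      (by linarith : (0:ℝ) ≤ δ+2)]
  have hs1 : 1-3*δ^2+2*δ^3 ≤ 1 := by
    nlinarith [mul_nonneg (sq_nonneg δ) (by linarith : (0:ℝ) ≤ 3-2*δ)]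
  have hb1 : 1-3*δ^2+3*δ^4-δ^6 ≤ 1 := le_trans hbs hs1
  have hs0 : (0:ℝ) ≤ 1-3*δ^2+2*δ^3 := le_trans hb0 hbs
  have hbm1 : (1-3*δ^2+3*δ^4-δ^6)^m ≤ 1 := pow_le_one₀ hb0 hb1
  have hsm1 : (1-3*δ^2+2*δ^3)^m ≤ 1 := pow_le_one₀ hs0 hs1
  have hbm0 : (0:ℝ) ≤ (1-3*δ^2+3*δ^4-δ^6)^m := pow_nonneg hb0 m
  have hsm0 : (0:ℝ) ≤ (1-3*δ^2+2*δ^3)^m := pow_nonneg hs0 m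
  have hbp : (1-3*δ^2+3*δ^4-δ^6)^(m+1)
      = (1-3*δ^2+3*δ^4-δ^6)^m * (1-3*δ^2+3*δ^4-δ^6) := pow_succ _ m
  have hma : ((m:ℝ)+1) * δ^3 ≤ K*δ := by
    nlinarith [mul_le_mul_of_nonneg_right hdK hδ0]
  have up := pow_sub_pow_le_up m hb0 hbs hs1
  have lo := pow_sub_pow_ge m hb0 hbs hs1
  have crude := pow_sub_pow_crude m hb0 hbs hs1
  have step1 : (1-3*δ^2+2*δ^3)^m - (1-3*δ^2+3*δ^4-δ^6)^(m+1) ≤ 2*(K*δ) + 3*δ := by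
    have t2 : (1-3*δ^2+3*δ^4-δ^6)^m - (1-3*δ^2+3*δ^4-δ^6)^(m+1)
        ≤ 1 - (1-3*δ^2+3*δ^4-δ^6) := by rw [hbp]; nlinarith
    have t3 : 1 - (1-3*δ^2+3*δ^4-δ^6) ≤ 3*δ := by
      nlinarith [mul_nonneg (pow_nonneg hδ0 4) (by nlinarith : (0:ℝ) ≤ 3-δ^2),
        sq_nonneg δ]
    have t4 : (m:ℝ)*((1-3*δ^2+2*δ^3) - (1-3*δ^2+3*δ^4-δ^6)) ≤ 2*(K*δ) := by
      have h5 : (m:ℝ)*((1-3*δ^2+2*δ^3) - (1-3*δ^2+3*δ^4-δ^6)) ≤ (m:ℝ)*(2*δ^3) := by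
        have h6 : (1-3*δ^2+2*δ^3) - (1-3*δ^2+3*δ^4-δ^6) ≤ 2*δ^3 := by
          nlinarith [mul_nonneg (pow_nonneg hδ0 4) (by nlinarith : (0:ℝ) ≤ 3-δ^2)]
        exact mul_le_mul_of_nonneg_left h6 (Nat.cast_nonneg m)
      have h7 : (m:ℝ)*(2*δ^3) ≤ 2*(((m:ℝ)+1)*δ^3) := by
        nlinarith [pow_nonneg hδ0 3]
      linarith
    linarith
  rw [abs_le]
  constructor
  · have l0 : ((m:ℝ)+1)*((1-3*δ^2+2*δ^3) - (1-3*δ^2+3*δ^4-δ^6))*(1-3*δ^2+3*δ^4-δ^6)^m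
        - 2*(((m:ℝ)+1)*δ^3)*(1-3*δ^2+3*δ^4-δ^6)^(m+1)
        = ((m:ℝ)+1)*(1-3*δ^2+3*δ^4-δ^6)^m*(-3*δ^4+δ^6+6*δ^5-6*δ^7+2*δ^9) := by
      rw [hbp]; ring
    have hrest : (0:ℝ) ≤ δ^6+6*δ^5-6*δ^7+2*δ^9 := by
      nlinarith [mul_nonneg (pow_nonneg hδ0 5) hδ2, pow_nonneg hδ0 6, pow_nonneg hδ0 9]
    have l1 : ((m:ℝ)+1)*(1-3*δ^2+3*δ^4-δ^6)^m*(-3*δ^4+δ^6+6*δ^5-6*δ^7+2*δ^9)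
        ≥ ((m:ℝ)+1)*(1-3*δ^2+3*δ^4-δ^6)^m*(-3*δ^4) := by
      nlinarith [mul_nonneg hD0 hbm0]
    have l2 : ((m:ℝ)+1)*(1-3*δ^2+3*δ^4-δ^6)^m*(-3*δ^4) ≥ -(3*(((m:ℝ)+1)*δ^4)) := by
      nlinarith [mul_nonneg (mul_nonneg hD0 (pow_nonneg hδ0 4))
        (by linarith : (0:ℝ) ≤ 1 - (1-3*δ^2+3*δ^4-δ^6)^m)]
    have l3 : -((4*K+6) * (((m:ℝ)+1) * δ^4)) ≤ -(3*(((m:ℝ)+1)*δ^4)) := by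
      nlinarith [mul_nonneg (mul_nonneg hK hD0) (pow_nonneg hδ0 4),
        mul_nonneg hD0 (pow_nonneg hδ0 4)]
    linarith [lo]
  · have u1 : ((m:ℝ)+1)*((1-3*δ^2+2*δ^3) - (1-3*δ^2+3*δ^4-δ^6))*(1-3*δ^2+2*δ^3)^m
        ≤ 2*(((m:ℝ)+1)*δ^3)*(1-3*δ^2+2*δ^3)^m := by
      have hd1 : (1-3*δ^2+2*δ^3) - (1-3*δ^2+3*δ^4-δ^6) ≤ 2*δ^3 := by
        nlinarith [mul_nonneg (pow_nonneg hδ0 4) (by nlinarith : (0:ℝ) ≤ 3-δ^2)]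
      nlinarith [mul_nonneg hD0 hsm0]
    have u3 : 2*(((m:ℝ)+1)*δ^3)*((1-3*δ^2+2*δ^3)^m - (1-3*δ^2+3*δ^4-δ^6)^(m+1))
        ≤ 2*(((m:ℝ)+1)*δ^3)*(2*(K*δ)+3*δ) := by
      have := mul_le_mul_of_nonneg_left step1
        (show (0:ℝ) ≤ 2*(((m:ℝ)+1)*δ^3) by positivity)
      linarith
    have u4 : 2*(((m:ℝ)+1)*δ^3)*(2*(K*δ)+3*δ) = (4*K+6)*(((m:ℝ)+1)*δ^4) := by ring
    linarith [up]

lemma approx {δ K : ℝ} {d : ℕ} (h0 : 0 < δ) (h1 : δ < 1) (hK : 0 ≤ K)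
    (hdK : (d:ℝ) * δ^2 ≤ K) :
    |(1 - 3*(1-δ^2)^d + 3*(1-2*δ^2+δ^3)^d - (1-3*δ^2+2*δ^3)^d)
      - ((1 - (1-δ^2)^d)^3
         + (d:ℝ)*δ^3*(1+2*(1 - (1-δ^2)^d))*(1 - (1 - (1-δ^2)^d))^2)|
    ≤ (7*K+12) * ((d:ℝ) * δ^4) := by
  cases d with
  | zero => simp
  | succ m =>
    have hcast : ((m+1 : ℕ) : ℝ) = (m:ℝ)+1 := by push_cast; ring
    rw [hcast]
    have hdK' : ((m:ℝ)+1) * δ^2 ≤ K := by rwa [hcast] at hdK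
    have hX := claimX m h0 h1 hK hdK'
    have hY := claimY m h0 h1 hK hdK'
    have ea : (1-2*δ^2+δ^4)^(m+1) = ((1-δ^2)^(m+1))^2 := by
      rw [pow_right_comm]
      congr 1; ring
    have eb : (1-3*δ^2+3*δ^4-δ^6)^(m+1) = ((1-δ^2)^(m+1))^3 := by
      rw [pow_right_comm]
      congr 1; ring
    have key : (1 - 3*(1-δ^2)^(m+1) + 3*(1-2*δ^2+δ^3)^(m+1) - (1-3*δ^2+2*δ^3)^(m+1))
        - ((1 - (1-δ^2)^(m+1))^3
           + ((m:ℝ)+1)*δ^3*(1+2*(1 - (1-δ^2)^(m+1)))*(1 - (1 - (1-δ^2)^(m+1)))^2)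
        = 3*((1-2*δ^2+δ^3)^(m+1) - (1-2*δ^2+δ^4)^(m+1)
              - ((m:ℝ)+1)*δ^3*(1-2*δ^2+δ^4)^(m+1))
          - ((1-3*δ^2+2*δ^3)^(m+1) - (1-3*δ^2+3*δ^4-δ^6)^(m+1)
              - 2*(((m:ℝ)+1)*δ^3)*(1-3*δ^2+3*δ^4-δ^6)^(m+1)) := by
      rw [ea, eb]; ring
    rw [key]
    have habs := abs_sub (3*((1-2*δ^2+δ^3)^(m+1) - (1-2*δ^2+δ^4)^(m+1)
        - ((m:ℝ)+1)*δ^3*(1-2*δ^2+δ^4)^(m+1)))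
      ((1-3*δ^2+2*δ^3)^(m+1) - (1-3*δ^2+3*δ^4-δ^6)^(m+1)
        - 2*(((m:ℝ)+1)*δ^3)*(1-3*δ^2+3*δ^4-δ^6)^(m+1))
    rw [abs_mul, abs_of_nonneg (by norm_num : (0:ℝ) ≤ 3)] at habs
    calc _ ≤ 3 * |(1-2*δ^2+δ^3)^(m+1) - (1-2*δ^2+δ^4)^(m+1)
              - ((m:ℝ)+1)*δ^3*(1-2*δ^2+δ^4)^(m+1)|
            + |(1-3*δ^2+2*δ^3)^(m+1) - (1-3*δ^2+3*δ^4-δ^6)^(m+1)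
              - 2*(((m:ℝ)+1)*δ^3)*(1-3*δ^2+3*δ^4-δ^6)^(m+1)| := habs
      _ ≤ 3 * ((K+2) * (((m:ℝ)+1) * δ^4)) + (4*K+6) * (((m:ℝ)+1) * δ^4) := by
          linarith
      _ = (7*K+12) * (((m:ℝ)+1) * δ^4) := by ring

/-- For `G ∼ RIG(n,d,p)` with `1-p = (1-δ²)^d = Ω(1)`,
`E[T(G)] = C(n,3)(p³ + dδ³(1+2p)(1-p)² + O(dδ⁴))`. -/

theorem rig_triangleCount_expectation
    (p δ : ℕ → ℝ) (d : ℕ → ℕ)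
    (hδ : ∀ n, 0 < δ n ∧ δ n < 1)
    (hrel : ∀ n, 1 - p n = (1 - δ n ^ 2) ^ d n)
    (hpbd : ∃ c > (0 : ℝ), ∀ᶠ n : ℕ in atTop, c ≤ 1 - p n) :
    ∃ C > (0 : ℝ), ∀ᶠ n : ℕ in atTop,
      |(∫ g, (triangleCount g : ℝ) ∂(rig n (d n) (δ n))) -
          (n.choose 3 : ℝ) *
            (p n ^ 3 + (d n : ℝ) * δ n ^ 3 * (1 + 2 * p n) * (1 - p n) ^ 2)| ≤
        C * ((n.choose 3 : ℝ) * ((d n : ℝ) * δ n ^ 4)) := by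
  obtain ⟨c, hc0, hev⟩ := hpbd
  set K : ℝ := max 0 (-Real.log c) with hKdef
  have hK0 : (0:ℝ) ≤ K := le_max_left _ _
  refine ⟨7*K+13, by linarith, ?_⟩
  filter_upwards [hev] with n hn
  obtain ⟨hd0, hd1⟩ := hδ n
  have hu : c ≤ (1 - δ n^2)^(d n) := by rw [← hrel n]; exact hn
  have hdK : (d n : ℝ) * δ n^2 ≤ K := by
    have hδ2 : (0:ℝ) ≤ 1 - δ n^2 := by nlinarith
    have h2 : 1 - δ n^2 ≤ Real.exp (-(δ n^2)) := by
      have := Real.add_one_le_exp (-(δ n^2)); linarith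
    have h3 : (1 - δ n^2)^(d n) ≤ Real.exp (-(δ n^2))^(d n) :=
      pow_le_pow_left₀ hδ2 h2 _
    rw [← Real.exp_nat_mul] at h3
    have h4 : Real.log c ≤ (d n : ℝ) * -(δ n^2) := by
      have h5 := Real.log_le_log hc0 (le_trans hu h3)
      rwa [Real.log_exp] at h5
    rw [mul_neg] at h4
    have h6 : (d n:ℝ) * δ n^2 ≤ -Real.log c := by linarith
    exact le_trans h6 (le_max_right _ _)
  have hp : p n = 1 - (1 - δ n^2)^(d n) := by have := hrel n; linarith
  rw [expectation_formula n (d n) hd0.le hd1.le, hp]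
  rw [← mul_sub, abs_mul, abs_of_nonneg (Nat.cast_nonneg _ : (0:ℝ) ≤ (n.choose 3 : ℝ))]
  have happrox := approx hd0 hd1 hK0 hdK
  have hstep := mul_le_mul_of_nonneg_left happrox
    (Nat.cast_nonneg (n.choose 3) : (0:ℝ) ≤ (n.choose 3 : ℝ))
  have hnn : (0:ℝ) ≤ (n.choose 3:ℝ) * ((d n:ℝ) * δ n^4) := by positivity
  nlinarith [hstep, hnn]
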